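/- The open-cover lifting category is homotopy invariant: if f, f' : X → Y are homotopic and ι, ι' : A → Y are homotopic, then liftcat^op_f(ι) = liftcat^op_{f'}(ι'). -/

import Mathlib

open unitInterval

/-- Open-cover lifting category: least `n` such that `X` has an open cover by `n+1` open
sets on each of which `f` lifts through `ι` up to homotopy; `⊤` if no such cover exists. -/
noncomputable def liftcatOp {X Y A : Type*} [TopologicalSpace X] [TopologicalSpace Y]
    [TopologicalSpace A] (f : C(X, Y)) (ι : C(A, Y)) : ℕ∞ :=
  sInf {N : ℕ∞ | ∃ n : ℕ, N = n ∧ ∃ U : Fin (n + 1) → Set X,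
    (∀ i, IsOpen (U i)) ∧ (∀ x, ∃ i, x ∈ U i) ∧
    ∀ i, ∃ l : C(U i, A), (ι.comp l).Homotopic (f.restrict (U i))}

/-- Open-cover sectional category. -/
noncomputable def secatOp {X A : Type*} [TopologicalSpace X] [TopologicalSpace A]
    (ι : C(A, X)) : ℕ∞ :=
  liftcatOp (ContinuousMap.id X) ι


private lemma restrict_homotopic {X Y : Type*} [TopologicalSpace X] [TopologicalSpace Y]
    {f f' : C(X, Y)} (hf : f.Homotopic f') (U : Set X) :
    (f.restrict U).Homotopic (f'.restrict U) := by
  have h1 : f.restrict U = f.comp ⟨Subtype.val, continuous_subtype_val⟩ := by ext x; rfl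
  have h2 : f'.restrict U = f'.comp ⟨Subtype.val, continuous_subtype_val⟩ := by ext x; rfl
  rw [h1, h2]
  exact hf.comp (ContinuousMap.Homotopic.refl _)

private lemma liftcatOp_mono {X Y A : Type*} [TopologicalSpace X] [TopologicalSpace Y]
    [TopologicalSpace A] (f f' : C(X, Y)) (ι ι' : C(A, Y))
    (hf : f.Homotopic f') (hι : ι.Homotopic ι') :
    liftcatOp f' ι' ≤ liftcatOp f ι := by
  apply sInf_le_sInf
  rintro N ⟨n, rfl, U, hU, hcov, hl⟩
  refine ⟨n, rfl, U, hU, hcov, fun i => ?_⟩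
  obtain ⟨l, hhom⟩ := hl i
  refine ⟨l, ?_⟩
  exact ((hι.symm.comp (ContinuousMap.Homotopic.refl l)).trans hhom).trans
    (restrict_homotopic hf (U i))

theorem liftcatOp_homotopy_invariant {X Y A : Type*} [TopologicalSpace X] [TopologicalSpace Y]
    [TopologicalSpace A] (f f' : C(X, Y)) (ι ι' : C(A, Y))
    (hf : f.Homotopic f') (hι : ι.Homotopic ι') :
    liftcatOp f ι = liftcatOp f' ι' :=
  le_antisymm (liftcatOp_mono f' f ι' ι hf.symm hι.symm) (liftcatOp_mono f f' ι ι' hf hι)
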